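/- Let ψ* denote the Legendre transform of ψ, i.e. ψ*(z) = sup_{w∈ℝ^m}(z·w − ψ(w)). Let φ ∈ C_c^∞(U×(0,T)) and let v ∈ C^∞(U×(0,T); ℝ^m) be a classical solution of Dψ(v_t) = div DF(Dv) in U×(0,T). Then for each t ∈ (0,T), d/dt ∫_U φ ψ*(Dψ(v_t)) dx + ∫_U φ D²F(Dv)(Dv_t, Dv_t) dx = ∫_U ( ψ*(Dψ(v_t)) φ_t − D²F(Dv)(Dv_t, v_t ⊗ Dφ) ) dx, where (v_t ⊗ Dφ)^i_j = v_t^i φ_{x_j}. -/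

import Mathlib

open MeasureTheory Filter Topology Metric Set
open scoped RealInnerProductSpace ENNReal NNReal ContDiff

noncomputable section

/-- The spatial domain `ℝⁿ`. -/
abbrev Sp (n : ℕ) := EuclideanSpace ℝ (Fin n)
/-- The target space `ℝ^m`. -/
abbrev Tg (m : ℕ) := EuclideanSpace ℝ (Fin m)
/-- The space `𝕄^{m×n}` of `m×n` matrices with the Frobenius inner product. -/
abbrev Mat (m n : ℕ) := EuclideanSpace ℝ (Fin m × Fin n)
/-- Symmetric-bilinear-valued data `S²(ℝⁿ;ℝ^m)` (indices `(i,j,k)`). -/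
abbrev Mat3 (m n : ℕ) := EuclideanSpace ℝ (Fin m × Fin n × Fin n)
/-- Trilinear-valued data `S³(ℝⁿ;ℝ^m)` (indices `(i,j,k,l)`). -/
abbrev Mat4 (m n : ℕ) := EuclideanSpace ℝ (Fin m × Fin n × Fin n × Fin n)

/-- Build a vector in `ℝ^m` from coordinates. -/
def vecOf {m : ℕ} (f : Fin m → ℝ) : Tg m := (WithLp.equiv 2 _).symm f
/-- Build a matrix in `𝕄^{m×n}` from entries. -/
def matOf {m n : ℕ} (f : Fin m × Fin n → ℝ) : Mat m n := (WithLp.equiv 2 _).symm f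

/-- Matrix-vector product `M z ∈ ℝ^m`. -/
def matVec {m n : ℕ} (M : Mat m n) (z : Sp n) : Tg m := vecOf fun i => ∑ j, M (i, j) * z j

/-- Tensor product `(v ⊗ z)^i_j = v^i z_j`. -/
def tens {m n : ℕ} (v : Tg m) (z : Sp n) : Mat m n := matOf fun q => v q.1 * z q.2

/-- The matrix `(∂ w^i/∂ x_j)` of the derivative of `w : ℝⁿ → ℝ^m` at `x`. -/
def gradMat {m n : ℕ} (w : Sp n → Tg m) (x : Sp n) : Mat m n :=
  matOf fun q => fderiv ℝ w x (EuclideanSpace.single q.2 1) q.1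

/-- Spatial gradient of a space-time scalar function. -/
def spGrad {n : ℕ} (φ : Sp n × ℝ → ℝ) (x : Sp n) (t : ℝ) : Sp n :=
  (WithLp.equiv 2 _).symm fun j => fderiv ℝ φ (x, t) (EuclideanSpace.single j 1, 0)

/-- Time derivative of a space-time scalar function. -/
def tDeriv {n : ℕ} (φ : Sp n × ℝ → ℝ) (x : Sp n) (t : ℝ) : ℝ := fderiv ℝ φ (x, t) (0, 1)

/-- The Hessian `D²F(M)` of `F` at `M` as a bilinear form. -/
def hessBil {m n : ℕ} (F : Mat m n → ℝ) (M ξ ζ : Mat m n) : ℝ :=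
  ⟪fderiv ℝ (fun N => gradient F N) M ξ, ζ⟫

/-- The entries `F_{M^i_j M^k_l}(M)` of the Hessian of `F` at `M`. -/
def hessEnt {m n : ℕ} (F : Mat m n → ℝ) (M : Mat m n) (i : Fin m) (j : Fin n)
    (k : Fin m) (l : Fin n) : ℝ :=
  fderiv ℝ (fun N => gradient F N) M (EuclideanSpace.single (k, l) 1) (i, j)

/-- Uniform convexity with quadratic growth:
`θ|w₁−w₂|² ≤ (Dψ(w₁)−Dψ(w₂))·(w₁−w₂) ≤ Θ|w₁−w₂|²`. -/
def UnifConv {E : Type*} [NormedAddCommGroup E] [InnerProductSpace ℝ E] [CompleteSpace E]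
    (θ Θ : ℝ) (ψ : E → ℝ) : Prop :=
  ∀ w₁ w₂ : E, θ * ‖w₁ - w₂‖ ^ 2 ≤ ⟪gradient ψ w₁ - gradient ψ w₂, w₁ - w₂⟫ ∧
    ⟪gradient ψ w₁ - gradient ψ w₂, w₁ - w₂⟫ ≤ Θ * ‖w₁ - w₂‖ ^ 2

/-- Normalization `ψ(0) = 0`, `Dψ(0) = 0`. -/
def Normalized {E : Type*} [NormedAddCommGroup E] [InnerProductSpace ℝ E] [CompleteSpace E]
    (ψ : E → ℝ) : Prop := ψ 0 = 0 ∧ gradient ψ 0 = 0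

/-- A bounded domain (open, connected, bounded set). -/
def IsBddDomain {n : ℕ} (U : Set (Sp n)) : Prop :=
  IsOpen U ∧ IsConnected U ∧ Bornology.IsBounded U

/-- A smooth compactly supported space-time test function supported in `U × (0,T)`. -/
structure IsSTTest {n : ℕ} (U : Set (Sp n)) (T : ℝ) (φ : Sp n × ℝ → ℝ) : Prop where
  smooth : ContDiff ℝ ∞ φ
  cpt : HasCompactSupport φ
  supp : tsupport φ ⊆ U ×ˢ Set.Ioo 0 T

/-- A smooth compactly supported spatial test map with values in `ℝ^m`, supported in `U`. -/
structure IsSpaceTest {n m : ℕ} (U : Set (Sp n)) (w : Sp n → Tg m) : Prop where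
  smooth : ContDiff ℝ ∞ w
  cpt : HasCompactSupport w
  supp : tsupport w ⊆ U

/-- The Legendre transform `ψ*(z) = sup_w (z·w − ψ(w))`. -/
def legendre {E : Type*} [NormedAddCommGroup E] [InnerProductSpace ℝ E] (ψ : E → ℝ) (z : E) : ℝ :=
  ⨆ w : E, (⟪z, w⟫ - ψ w)

/-- `g` is the weak time derivative of `f` on `U × (0,T)`. -/
def IsWeakTimeDeriv {n m : ℕ} (U : Set (Sp n)) (T : ℝ) (f g : Sp n → ℝ → Tg m) : Prop :=
  ∀ φ : Sp n × ℝ → ℝ, IsSTTest U T φ →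
    ∫ p in U ×ˢ Set.Ioo 0 T, tDeriv φ p.1 p.2 • f p.1 p.2 =
      - ∫ p in U ×ˢ Set.Ioo 0 T, φ p • g p.1 p.2

/-- `g` is the weak partial derivative `∂f/∂x_j` of `f` on `U × (0,T)` (scalar version). -/
def IsWeakSpaceDeriv {n : ℕ} (U : Set (Sp n)) (T : ℝ) (j : Fin n) (f g : Sp n → ℝ → ℝ) : Prop :=
  ∀ φ : Sp n × ℝ → ℝ, IsSTTest U T φ →
    ∫ p in U ×ˢ Set.Ioo 0 T, fderiv ℝ φ p (EuclideanSpace.single j 1, 0) * f p.1 p.2 =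
      - ∫ p in U ×ˢ Set.Ioo 0 T, φ p * g p.1 p.2

/-- Local square integrability over `U × (0,T)`. -/
def L2locST {n : ℕ} {E : Type*} [NormedAddCommGroup E] (U : Set (Sp n)) (T : ℝ)
    (f : Sp n → ℝ → E) : Prop :=
  ∀ K : Set (Sp n), IsCompact K → K ⊆ U → ∀ t₀ t₁ : ℝ, 0 < t₀ → t₁ < T →
    IntegrableOn (fun p : Sp n × ℝ => ‖f p.1 p.2‖ ^ 2) (K ×ˢ Set.Icc t₀ t₁)

/-- Local `p`-th power integrability over `U × (0,T)` (`p` a real exponent). -/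
def LplocST {n : ℕ} {E : Type*} [NormedAddCommGroup E] (U : Set (Sp n)) (T : ℝ) (p : ℝ)
    (f : Sp n → ℝ → E) : Prop :=
  ∀ K : Set (Sp n), IsCompact K → K ⊆ U → ∀ t₀ t₁ : ℝ, 0 < t₀ → t₁ < T →
    IntegrableOn (fun q : Sp n × ℝ => ‖f q.1 q.2‖ ^ p) (K ×ˢ Set.Icc t₀ t₁)

/-- Membership in `L^∞_loc((0,T); L²_loc(U))`. -/
def LinfL2loc {n : ℕ} {E : Type*} [NormedAddCommGroup E] (U : Set (Sp n)) (T : ℝ)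
    (f : Sp n → ℝ → E) : Prop :=
  ∀ K : Set (Sp n), IsCompact K → K ⊆ U → ∀ t₀ t₁ : ℝ, 0 < t₀ → t₁ < T →
    ∃ C : ℝ, ∀ᵐ t ∂(volume.restrict (Set.Icc t₀ t₁)), ∫ x in K, ‖f x t‖ ^ 2 ≤ C

/-- A weak solution of `Dψ(v_t) = div DF(Dv)` on `U × (0,T)`, together with its weak
derivatives `v_t`, `Dv`, `Dv_t`. -/
structure WeakSolution {n m : ℕ} (ψ : Tg m → ℝ) (F : Mat m n → ℝ)
    (U : Set (Sp n)) (T : ℝ) where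
  v : Sp n → ℝ → Tg m
  vt : Sp n → ℝ → Tg m
  Dv : Sp n → ℝ → Mat m n
  Dvt : Sp n → ℝ → Mat m n
  meas_v : AEMeasurable (fun p : Sp n × ℝ => v p.1 p.2)
  meas_vt : AEMeasurable (fun p : Sp n × ℝ => vt p.1 p.2)
  meas_Dv : AEMeasurable (fun p : Sp n × ℝ => Dv p.1 p.2)
  meas_Dvt : AEMeasurable (fun p : Sp n × ℝ => Dvt p.1 p.2)
  l2loc_v : L2locST U T v
  weak_vt : IsWeakTimeDeriv U T v vt
  weak_Dv : ∀ (i : Fin m) (j : Fin n),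
    IsWeakSpaceDeriv U T j (fun x t => v x t i) (fun x t => Dv x t (i, j))
  weak_Dvt : ∀ (i : Fin m) (j : Fin n),
    IsWeakSpaceDeriv U T j (fun x t => vt x t i) (fun x t => Dvt x t (i, j))
  bdd_Dv : LinfL2loc U T Dv
  bdd_vt : LinfL2loc U T vt
  l2loc_Dvt : L2locST U T Dvt
  eqn : ∀ᵐ t ∂(volume.restrict (Set.Ioo 0 T)), ∀ w : Sp n → Tg m, IsSpaceTest U w →
    (∫ x in U, ⟪gradient ψ (vt x t), w x⟫) +
      (∫ x in U, ⟪gradient F (Dv x t), gradMat w x⟫) = 0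

/-- `D2v` is the weak spatial Hessian attached to the weak gradient `Dv`. -/
def IsWeakHess {n m : ℕ} (U : Set (Sp n)) (T : ℝ) (Dv : Sp n → ℝ → Mat m n)
    (D2v : Sp n → ℝ → Mat3 m n) : Prop :=
  AEMeasurable (fun p : Sp n × ℝ => D2v p.1 p.2) ∧
  ∀ (i : Fin m) (j k : Fin n),
    IsWeakSpaceDeriv U T k (fun x t => Dv x t (i, j)) (fun x t => D2v x t (i, j, k))

/-- `D3v` is the weak spatial third derivative attached to `D2v`. -/
def IsWeakThird {n m : ℕ} (U : Set (Sp n)) (T : ℝ) (D2v : Sp n → ℝ → Mat3 m n)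
    (D3v : Sp n → ℝ → Mat4 m n) : Prop :=
  AEMeasurable (fun p : Sp n × ℝ => D3v p.1 p.2) ∧
  ∀ (i : Fin m) (j k l : Fin n),
    IsWeakSpaceDeriv U T l (fun x t => D2v x t (i, j, k)) (fun x t => D3v x t (i, j, k, l))

/-- The parabolic cylinder `Q_r(x,t) = B_r(x) × (t−r²/2, t+r²/2)`. -/
def pcyl {n : ℕ} (x : Sp n) (t r : ℝ) : Set (Sp n × ℝ) :=
  Metric.ball x r ×ˢ Set.Ioo (t - r ^ 2 / 2) (t + r ^ 2 / 2)

/-- The average of `f` over a set `Q` of space-time. -/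
def pavg {n : ℕ} {E : Type*} [NormedAddCommGroup E] [NormedSpace ℝ E]
    (Q : Set (Sp n × ℝ)) (f : Sp n → ℝ → E) : E :=
  ((volume Q).toReal)⁻¹ • ∫ p in Q, f p.1 p.2

/-- First-order Taylor term: the matrix `((D²v)_Q z)^i_j = Σ_k (D²v)_Q(i,j,k) z_k`. -/
def taylor1 {m n : ℕ} (N : Mat3 m n) (z : Sp n) : Mat m n :=
  matOf fun q => ∑ k, N (q.1, q.2, k) * z k

/-- The local space-time energy `E(x,t,r)` of a solution, built from `v_t`, `Dv`, `D²v`. -/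
def energy {n m : ℕ} (vt : Sp n → ℝ → Tg m) (Dv : Sp n → ℝ → Mat m n)
    (D2v : Sp n → ℝ → Mat3 m n) (x : Sp n) (t r : ℝ) : ℝ :=
  pavg (pcyl x t r) (fun y s => ‖vt y s - pavg (pcyl x t r) vt‖ ^ 2) +
  pavg (pcyl x t r) (fun y s =>
    ‖r⁻¹ • (Dv y s - pavg (pcyl x t r) Dv - taylor1 (pavg (pcyl x t r) D2v) (y - x))‖ ^ 2) +
  pavg (pcyl x t r) (fun y s => ‖D2v y s - pavg (pcyl x t r) D2v‖ ^ 2)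

/-- The `H¹(V)`-distance between two pairs (function, gradient). -/
def h1dist {n m : ℕ} (V : Set (Sp n)) (u₁ : Sp n → Tg m) (Du₁ : Sp n → Mat m n)
    (u₂ : Sp n → Tg m) (Du₂ : Sp n → Mat m n) : ℝ :=
  (∫ x in V, (‖u₁ x - u₂ x‖ ^ 2 + ‖Du₁ x - Du₂ x‖ ^ 2)) ^ (1/2 : ℝ)

/-- The `H⁻¹(V)`-norm of `g`, as a supremum of pairings against test maps with
`‖Dw‖_{L²(V)} ≤ 1`. -/
def hneg1norm {n m : ℕ} (V : Set (Sp n)) (g : Sp n → Tg m) : ℝ :=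
  ⨆ w : {w : Sp n → Tg m // IsSpaceTest V w ∧ ∫ x in V, ‖gradMat w x‖ ^ 2 ≤ 1},
    ∫ x in V, ⟪g x, w.1 x⟫

/-- Classical time derivative. -/
def cvt {n m : ℕ} (v : Sp n → ℝ → Tg m) (x : Sp n) (t : ℝ) : Tg m := deriv (fun s => v x s) t
/-- Classical spatial gradient matrix. -/
def cDv {n m : ℕ} (v : Sp n → ℝ → Tg m) (x : Sp n) (t : ℝ) : Mat m n :=
  gradMat (fun y => v y t) x
/-- Classical spatial gradient of the time derivative. -/
def cDvt {n m : ℕ} (v : Sp n → ℝ → Tg m) (x : Sp n) (t : ℝ) : Mat m n :=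
  gradMat (fun y => cvt v y t) x

/-- A classical (smooth) solution of `Dψ(v_t) = div DF(Dv)` in `U × (0,T)`. -/
def IsClassicalSolution {n m : ℕ} (ψ : Tg m → ℝ) (F : Mat m n → ℝ) (U : Set (Sp n)) (T : ℝ)
    (v : Sp n → ℝ → Tg m) : Prop :=
  ContDiffOn ℝ ∞ (fun p : Sp n × ℝ => v p.1 p.2) (U ×ˢ Set.Ioo 0 T) ∧
  ∀ x ∈ U, ∀ t ∈ Set.Ioo (0:ℝ) T, ∀ i : Fin m,
    gradient ψ (cvt v x t) i =
      ∑ j, fderiv ℝ (fun y => gradient F (cDv v y t) (i, j)) x (EuclideanSpace.single j 1)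



section Aux
open scoped Manifold

theorem glueContDiff {E F : Type*} [NormedAddCommGroup E] [NormedSpace ℝ E]
    [NormedAddCommGroup F] [NormedSpace ℝ F] {f : E → F} {U K : Set E} {k : WithTop ℕ∞}
    (hUo : IsOpen U) (hKc : IsClosed K) (hKU : K ⊆ U)
    (h1 : ContDiffOn ℝ k f U) (h0 : ∀ x ∉ K, f x = 0) : ContDiff ℝ k f := by
  rw [contDiff_iff_contDiffAt]
  intro x
  by_cases hx : x ∈ U
  · exact (h1 x hx).contDiffAt (hUo.mem_nhds hx)
  · have hx' : x ∈ Kᶜ := fun h => hx (hKU h)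
    have : f =ᶠ[𝓝 x] (fun _ => 0) :=
      Filter.eventuallyEq_of_mem (hKc.isOpen_compl.mem_nhds hx') (fun y hy => h0 y hy)
    exact (contDiffAt_const (c := (0:F))).congr_of_eventuallyEq this


theorem exists_cutoff {E : Type*} [NormedAddCommGroup E] [NormedSpace ℝ E]
    [FiniteDimensional ℝ E] {K : Set E} (hK : IsCompact K) :
    ∃ χ : E → ℝ, ContDiff ℝ ∞ χ ∧ HasCompactSupport χ ∧ ∀ᶠ x in 𝓝ˢ K, χ x = 1 := by
  have hsub : K ⊆ interior (Metric.cthickening 1 K) := by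
    intro x hx
    have : Metric.thickening 1 K ⊆ interior (Metric.cthickening 1 K) :=
      interior_maximal (Metric.thickening_subset_cthickening 1 K) Metric.isOpen_thickening
    exact this (Metric.self_subset_thickening (by norm_num) K hx)
  obtain ⟨f, hf1, hf0, -⟩ := exists_contMDiffMap_one_nhds_of_subset_interior 𝓘(ℝ, E) (n := ⊤)
    (s := K) (t := Metric.cthickening 1 K) hK.isClosed hsub
  refine ⟨f, contMDiff_iff_contDiff.mp f.contMDiff, ?_, hf1⟩
  exact HasCompactSupport.intro (hK.cthickening) hf0

/-- support of fderiv inside tsupport -/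
theorem fderiv_zero_of_not_mem_tsupport {E F : Type*} [NormedAddCommGroup E] [NormedSpace ℝ E]
    [NormedAddCommGroup F] [NormedSpace ℝ F] {f : E → F} {x : E}
    (hx : x ∉ tsupport f) : fderiv ℝ f x = 0 := by
  have : f =ᶠ[𝓝 x] (fun _ => 0) :=
    Filter.eventuallyEq_of_mem (isOpen_compl_iff.mpr (isClosed_tsupport f)
      |>.mem_nhds hx) (fun y hy => image_eq_zero_of_notMem_tsupport hy)
  rw [this.fderiv_eq, fderiv_const_apply]

theorem integral_fderiv_dir_eq_zero {n : ℕ} {g : Sp n → ℝ}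
    (hg : ContDiff ℝ 1 g) (hc : HasCompactSupport g) (w : Sp n) :
    ∫ x, fderiv ℝ g x w = 0 := by
  obtain ⟨χ, hχs, hχc, hχ1⟩ := exists_cutoff (hc : IsCompact (tsupport g))
  obtain ⟨O, hO_open, hO_sub, hO1⟩ := eventually_nhdsSet_iff_exists.mp hχ1
  -- ∫ χ * g' = - ∫ χ' * g
  have hgd : Differentiable ℝ g := hg.differentiable one_ne_zero
  have hχd : Differentiable ℝ χ := hχs.differentiable (by norm_num)
  have key := integral_mul_fderiv_eq_neg_fderiv_mul_of_integrable
    (f := χ) (g := g) (v := w) (μ := volume) ?_ ?_ ?_ (fun x _ => hχd x) (fun x _ => hgd x)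
  · have e1 : ∀ x, fderiv ℝ χ x w * g x = 0 := by
      intro x
      by_cases hx : x ∈ tsupport g
      · have hev : χ =ᶠ[𝓝 x] (fun _ => 1) :=
          Filter.eventuallyEq_of_mem (hO_open.mem_nhds (hO_sub hx)) (fun y hy => hO1 y hy)
        rw [hev.fderiv_eq, fderiv_const_apply]; simp
      · simp [image_eq_zero_of_notMem_tsupport hx]
    have e2 : ∀ x, χ x * fderiv ℝ g x w = fderiv ℝ g x w := by
      intro x
      by_cases hx : x ∈ tsupport g
      · rw [hO1 x (hO_sub hx), one_mul]
      · rw [fderiv_zero_of_not_mem_tsupport hx]; simp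
    calc ∫ x, fderiv ℝ g x w = ∫ x, χ x * fderiv ℝ g x w := by
          exact integral_congr_ae (Filter.Eventually.of_forall (fun x => (e2 x).symm))
      _ = -∫ x, fderiv ℝ χ x w * g x := key
      _ = 0 := by simp [e1]
  · apply Continuous.integrable_of_hasCompactSupport
      (((hχs.continuous_fderiv (by norm_num)).clm_apply continuous_const).mul hg.continuous)
    exact hc.mul_left
  · apply Continuous.integrable_of_hasCompactSupport
      (hχs.continuous.mul ((hg.continuous_fderiv one_ne_zero).clm_apply continuous_const))
    exact hχc.mul_right
  · apply Continuous.integrable_of_hasCompactSupport (hχs.continuous.mul hg.continuous)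
    exact hχc.mul_right

theorem inner_gradient_apply {E : Type*} [NormedAddCommGroup E] [InnerProductSpace ℝ E]
    [CompleteSpace E] (ψ : E → ℝ) (y z : E) : ⟪gradient ψ y, z⟫ = fderiv ℝ ψ y z :=
  InnerProductSpace.toDual_symm_apply

theorem gradient_convex_ineq {E : Type*} [NormedAddCommGroup E] [InnerProductSpace ℝ E]
    [CompleteSpace E] {ψ : E → ℝ} (hψd : Differentiable ℝ ψ)
    (hmono : ∀ y z : E, 0 ≤ ⟪gradient ψ y - gradient ψ z, y - z⟫) (w u : E) :
    ψ w + ⟪gradient ψ w, u - w⟫ ≤ ψ u := by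
  set γ : ℝ → E := fun τ => w + τ • (u - w) with hγdef
  set g : ℝ → ℝ := fun τ => ψ (γ τ) - τ * ⟪gradient ψ w, u - w⟫ with hgdef
  have hγ : ∀ τ : ℝ, HasDerivAt γ (u - w) τ := by
    intro τ
    simpa [hγdef] using ((hasDerivAt_id τ).smul_const (u - w)).const_add w
  have hg : ∀ τ : ℝ, HasDerivAt g
      (⟪gradient ψ (γ τ), u - w⟫ - ⟪gradient ψ w, u - w⟫) τ := by
    intro τ
    have h1 : HasDerivAt (fun τ => ψ (γ τ)) (fderiv ℝ ψ (γ τ) (u - w)) τ :=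
      (hψd (γ τ)).hasFDerivAt.comp_hasDerivAt τ (hγ τ)
    rw [← inner_gradient_apply] at h1
    exact h1.sub (hasDerivAt_mul_const (⟪gradient ψ w, u - w⟫ : ℝ))
  have hmonoOn : MonotoneOn g (Set.Icc (0:ℝ) 1) := by
    apply monotoneOn_of_deriv_nonneg (convex_Icc 0 1)
      (fun τ _ => ((hg τ).continuousAt.continuousWithinAt))
      (fun τ _ => ((hg τ).differentiableAt.differentiableWithinAt))
    intro τ hτ
    rw [interior_Icc] at hτ
    rw [(hg τ).deriv]
    have h2 := hmono (γ τ) w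
    have h3 : γ τ - w = τ • (u - w) := by simp [hγdef]
    rw [h3, inner_smul_right] at h2
    have h4 : (0:ℝ) ≤ τ * ⟪gradient ψ (γ τ) - gradient ψ w, u - w⟫ := h2
    have h5 : (0:ℝ) ≤ ⟪gradient ψ (γ τ) - gradient ψ w, u - w⟫ :=
      nonneg_of_mul_nonneg_right h4 hτ.1
    rw [inner_sub_left] at h5
    linarith
  have h01 := hmonoOn (Set.mem_Icc.mpr ⟨le_refl 0, zero_le_one⟩)
    (Set.mem_Icc.mpr ⟨zero_le_one, le_refl 1⟩) zero_le_one
  have hg0 : g 0 = ψ w := by simp [hgdef, hγdef]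
  have hg1 : g 1 = ψ u - ⟪gradient ψ w, u - w⟫ := by simp [hgdef, hγdef]
  rw [hg0, hg1] at h01
  linarith

theorem legendre_gradient {E : Type*} [NormedAddCommGroup E] [InnerProductSpace ℝ E]
    [CompleteSpace E] {ψ : E → ℝ} (hψd : Differentiable ℝ ψ)
    (hmono : ∀ y z : E, 0 ≤ ⟪gradient ψ y - gradient ψ z, y - z⟫) (w : E) :
    legendre ψ (gradient ψ w) = ⟪gradient ψ w, w⟫ - ψ w := by
  set z := gradient ψ w with hz
  have hub : ∀ u : E, ⟪z, u⟫ - ψ u ≤ ⟪z, w⟫ - ψ w := by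
    intro u
    have := gradient_convex_ineq hψd hmono w u
    rw [inner_sub_right] at this
    linarith
  have hbdd : BddAbove (Set.range fun u : E => ⟪z, u⟫ - ψ u) := by
    refine ⟨⟪z, w⟫ - ψ w, ?_⟩
    rintro _ ⟨u, rfl⟩
    exact hub u
  exact le_antisymm (ciSup_le hub) (le_ciSup hbdd w)

theorem hasDerivAt_setIntegral_param {n : ℕ} {U K : Set (Sp n)} (hUo : IsOpen U)
    (hK : IsCompact K) (hKU : K ⊆ U) {T t : ℝ} (ht : t ∈ Set.Ioo 0 T)
    {f f' : Sp n → ℝ → ℝ}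
    (hcont : ContinuousOn (fun p : Sp n × ℝ => f p.1 p.2) (U ×ˢ Set.Ioo 0 T))
    (hcont' : ContinuousOn (fun p : Sp n × ℝ => f' p.1 p.2) (U ×ˢ Set.Ioo 0 T))
    (hderiv : ∀ x ∈ U, ∀ s ∈ Set.Ioo (0:ℝ) T, HasDerivAt (f x) (f' x s) s)
    (hzero : ∀ x ∉ K, ∀ s, f x s = 0) (hzero' : ∀ x ∉ K, ∀ s, f' x s = 0) :
    HasDerivAt (fun s => ∫ x in U, f x s) (∫ x in U, f' x t) t := by
  obtain ⟨δ, hδpos, hδ⟩ := Metric.isOpen_iff.mp isOpen_Ioo t ht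
  set ε := δ / 2 with hεdef
  have hεpos : 0 < ε := by positivity
  have hballIoo : Metric.ball t ε ⊆ Set.Ioo 0 T :=
    fun s hs => hδ (Metric.ball_subset_ball (by simp [hεdef]; linarith) hs)
  have hJIoo : Set.Icc (t - ε) (t + ε) ⊆ Set.Ioo 0 T := by
    intro s hs
    apply hδ
    have h1 : |s - t| ≤ ε := abs_sub_le_iff.mpr ⟨by linarith [hs.2], by linarith [hs.1]⟩
    rw [Metric.mem_ball, Real.dist_eq]
    linarith [abs_nonneg (s - t)]
  -- slice continuity
  have hslice : ∀ s ∈ Set.Ioo (0:ℝ) T, ContinuousOn (fun x => f x s) U := fun s hs =>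
    hcont.comp (continuous_id.prodMk continuous_const).continuousOn
      (fun x hx => Set.mk_mem_prod hx hs)
  have hslice' : ∀ s ∈ Set.Ioo (0:ℝ) T, ContinuousOn (fun x => f' x s) U := fun s hs =>
    hcont'.comp (continuous_id.prodMk continuous_const).continuousOn
      (fun x hx => Set.mk_mem_prod hx hs)
  have hglue : ∀ s ∈ Set.Ioo (0:ℝ) T, Continuous (fun x => f x s) := fun s hs =>
    contDiff_zero.mp (glueContDiff hUo hK.isClosed hKU (contDiffOn_zero.mpr (hslice s hs))
      (fun x hx => hzero x hx s))
  have hglue' : ∀ s ∈ Set.Ioo (0:ℝ) T, Continuous (fun x => f' x s) := fun s hs =>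
    contDiff_zero.mp (glueContDiff hUo hK.isClosed hKU (contDiffOn_zero.mpr (hslice' s hs))
      (fun x hx => hzero' x hx s))
  -- bound
  obtain ⟨C, hC⟩ := (hK.prod isCompact_Icc).exists_bound_of_continuousOn
    (hcont'.mono (Set.prod_mono hKU hJIoo))
  set C' := max C 0 with hC'def
  set bound : Sp n → ℝ := K.indicator (fun _ => C') with hbound
  have key := hasDerivAt_integral_of_dominated_loc_of_deriv_le
    (μ := volume.restrict U) (F := fun s x => f x s) (F' := fun s x => f' x s)
    (x₀ := t) (bound := bound) (Metric.ball_mem_nhds t hεpos) ?_ ?_ ?_ ?_ ?_ ?_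
  · exact key.2
  · filter_upwards [Metric.ball_mem_nhds t hεpos] with s hs
    exact ((hslice s (hballIoo hs)).aestronglyMeasurable hUo.measurableSet)
  · exact ((hglue t ht).integrable_of_hasCompactSupport
      (HasCompactSupport.intro hK (fun x hx => hzero x hx t))).restrict
  · exact ((hslice' t ht).aestronglyMeasurable hUo.measurableSet)
  · refine (MeasureTheory.ae_restrict_iff' hUo.measurableSet).2
      (Filter.Eventually.of_forall (fun x hxU s hs => ?_))
    show ‖f' x s‖ ≤ bound x
    by_cases hxK : x ∈ K
    · have hsJ : s ∈ Set.Icc (t - ε) (t + ε) := by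
        rw [Metric.mem_ball, Real.dist_eq, abs_sub_lt_iff] at hs
        constructor <;> linarith [hs.1, hs.2]
      have := hC (x, s) (Set.mk_mem_prod hxK hsJ)
      rw [hbound, Set.indicator_of_mem hxK]
      exact this.trans (le_max_left _ _)
    · rw [hzero' x hxK s, hbound, Set.indicator_of_notMem hxK]
      simp
  · refine (Integrable.restrict ?_ (s := U))
    rw [hbound, integrable_indicator_iff hK.measurableSet]
    exact integrableOn_const hK.measure_lt_top.ne
  · refine (MeasureTheory.ae_restrict_iff' hUo.measurableSet).2
      (Filter.Eventually.of_forall (fun x hxU s hs => ?_))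
    exact hderiv x hxU s (hballIoo hs)

-- time and space slice derivatives
theorem hasDerivAt_timeSlice {n : ℕ} {E : Type*} [NormedAddCommGroup E] [NormedSpace ℝ E]
    {g : Sp n × ℝ → E} {x : Sp n} {s : ℝ} (hd : DifferentiableAt ℝ g (x, s)) :
    HasDerivAt (fun s' => g (x, s')) (fderiv ℝ g (x, s) (0, 1)) s := by
  have hcurve : HasDerivAt (fun s' : ℝ => ((x, s') : Sp n × ℝ)) ((0 : Sp n), (1 : ℝ)) s :=
    (hasDerivAt_const s x).prodMk (hasDerivAt_id s)
  exact hd.hasFDerivAt.comp_hasDerivAt s hcurve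

theorem hasFDerivAt_spaceSlice {n : ℕ} {E : Type*} [NormedAddCommGroup E] [NormedSpace ℝ E]
    {g : Sp n × ℝ → E} {x : Sp n} {s : ℝ} (hd : DifferentiableAt ℝ g (x, s)) :
    HasFDerivAt (fun y => g (y, s))
      ((fderiv ℝ g (x, s)).comp (ContinuousLinearMap.inl ℝ (Sp n) ℝ)) x := by
  have hcurve : HasFDerivAt (fun y : Sp n => ((y, s) : Sp n × ℝ))
      (ContinuousLinearMap.inl ℝ (Sp n) ℝ) x := (hasFDerivAt_id x).prodMk (hasFDerivAt_const s x)
  exact hd.hasFDerivAt.comp x hcurve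

theorem fderiv_zero_of_eventually_zero {E F : Type*} [NormedAddCommGroup E] [NormedSpace ℝ E]
    [NormedAddCommGroup F] [NormedSpace ℝ F] {f : E → F} {x : E}
    (h : f =ᶠ[𝓝 x] fun _ => 0) : fderiv ℝ f x = 0 := by
  rw [h.fderiv_eq, fderiv_const_apply]

section Core
variable {n m : ℕ}

/-- The space-time map. -/
def Vfun (v : Sp n → ℝ → Tg m) : Sp n × ℝ → Tg m := fun p => v p.1 p.2
/-- Time derivative field. -/
def Wfun (v : Sp n → ℝ → Tg m) : Sp n × ℝ → Tg m := fun p => fderiv ℝ (Vfun v) p (0, 1)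
/-- Entries of the spatial gradient field. -/
def entM (v : Sp n → ℝ → Tg m) (q : Fin m × Fin n) : Sp n × ℝ → ℝ :=
  fun p => fderiv ℝ (Vfun v) p (EuclideanSpace.single q.2 1, 0) q.1
/-- Spatial gradient field. -/
def Mfun (v : Sp n → ℝ → Tg m) : Sp n × ℝ → Mat m n := fun p => matOf fun q => entM v q p
/-- Time derivative of the spatial gradient field. -/
def DMt (v : Sp n → ℝ → Tg m) : Sp n × ℝ → Mat m n :=
  fun p => matOf fun q => fderiv ℝ (entM v q) p (0, 1)
/-- Time derivative of the time derivative field direction `(0,1)`. -/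
def W2fun (v : Sp n → ℝ → Tg m) : Sp n × ℝ → Tg m := fun p => fderiv ℝ (Wfun v) p (0, 1)

variable {v : Sp n → ℝ → Tg m} {P : Set (Sp n × ℝ)}

theorem matOf_eq_cle (f : Fin m × Fin n → ℝ) :
    matOf f = (PiLp.continuousLinearEquiv 2 ℝ (fun _ : Fin m × Fin n => ℝ)).symm f := rfl

theorem contDiffOn_matOf {g : Sp n × ℝ → Fin m × Fin n → ℝ} {k : WithTop ℕ∞}
    (hg : ∀ q, ContDiffOn ℝ k (fun p => g p q) P) :
    ContDiffOn ℝ k (fun p => matOf (g p)) P := by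
  have : ContDiffOn ℝ k g P := contDiffOn_pi.mpr hg
  exact ((PiLp.continuousLinearEquiv 2 ℝ _).symm.contDiff.comp_contDiffOn this : _)

section Smooth
variable (hPo : IsOpen P) (hVP : ContDiffOn ℝ ∞ (Vfun v) P)
include hPo hVP

theorem contDiffOn_fderiv_dir (c : Sp n × ℝ) :
    ContDiffOn ℝ ∞ (fun p => fderiv ℝ (Vfun v) p c) P := by
  exact ((hVP.fderiv_of_isOpen hPo (by simp)).clm_apply contDiffOn_const)

theorem contDiffOn_Wfun : ContDiffOn ℝ ∞ (Wfun v) P := contDiffOn_fderiv_dir hPo hVP _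

theorem contDiffOn_entM (q : Fin m × Fin n) : ContDiffOn ℝ ∞ (entM v q) P := by
  exact (EuclideanSpace.proj q.1).contDiff.comp_contDiffOn
    (contDiffOn_fderiv_dir hPo hVP (EuclideanSpace.single q.2 1, 0))

theorem contDiffOn_Mfun : ContDiffOn ℝ ∞ (Mfun v) P :=
  contDiffOn_matOf (fun q => contDiffOn_entM hPo hVP q)

theorem contDiffOn_DMt : ContDiffOn ℝ ∞ (DMt v) P := by
  apply contDiffOn_matOf
  intro q
  exact ((contDiffOn_entM hPo hVP q).fderiv_of_isOpen hPo (by simp)).clm_apply contDiffOn_const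

theorem contDiffOn_W2fun : ContDiffOn ℝ ∞ (W2fun v) P := by
  exact ((contDiffOn_Wfun hPo hVP).fderiv_of_isOpen hPo (by simp)).clm_apply contDiffOn_const

end Smooth
end Core

section Pointwise
variable {n m : ℕ} {v : Sp n → ℝ → Tg m} {U : Set (Sp n)} {T : ℝ} {x : Sp n} {s : ℝ}

theorem diffAt_of_contDiffOn {E F : Type*} [NormedAddCommGroup E] [NormedSpace ℝ E]
    [NormedAddCommGroup F] [NormedSpace ℝ F] {g : E → F} {P : Set E} {p : E} {k : WithTop ℕ∞}
    (hPo : IsOpen P) (h : ContDiffOn ℝ k g P) (hk : 1 ≤ k) (hp : p ∈ P) :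
    DifferentiableAt ℝ g p :=
  ((h p hp).contDiffAt (hPo.mem_nhds hp)).differentiableAt (zero_lt_one.trans_le hk).ne'

variable (hUo : IsOpen U) (hVP : ContDiffOn ℝ ∞ (Vfun v) (U ×ˢ Set.Ioo (0:ℝ) T))
  (hp : (x, s) ∈ U ×ˢ Set.Ioo (0:ℝ) T)
include hUo hVP hp

theorem hasDerivAt_v_time : HasDerivAt (fun s' => v x s') (Wfun v (x, s)) s :=
  hasDerivAt_timeSlice (diffAt_of_contDiffOn (hUo.prod isOpen_Ioo) hVP (by norm_num) hp)

theorem cvt_eq_W : cvt v x s = Wfun v (x, s) :=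
  (hasDerivAt_v_time hUo hVP hp).deriv

theorem hasDerivAt_W_time :
    HasDerivAt (fun s' => Wfun v (x, s')) (W2fun v (x, s)) s :=
  hasDerivAt_timeSlice (diffAt_of_contDiffOn (hUo.prod isOpen_Ioo)
    (contDiffOn_Wfun (hUo.prod isOpen_Ioo) hVP) (by norm_num) hp)

theorem cvt_eventuallyEq :
    (fun s' => cvt v x s') =ᶠ[𝓝 s] (fun s' => Wfun v (x, s')) := by
  have hmem : Set.Ioo (0:ℝ) T ∈ 𝓝 s := isOpen_Ioo.mem_nhds hp.2
  filter_upwards [hmem] with s' hs'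
  exact cvt_eq_W hUo hVP (Set.mk_mem_prod hp.1 hs')

theorem hasDerivAt_cvt_time :
    HasDerivAt (fun s' => cvt v x s') (W2fun v (x, s)) s :=
  (hasDerivAt_W_time hUo hVP hp).congr_of_eventuallyEq (cvt_eventuallyEq hUo hVP hp)

theorem cDv_eq_M : cDv v x s = Mfun v (x, s) := by
  have hsp := hasFDerivAt_spaceSlice (g := Vfun v)
    (diffAt_of_contDiffOn (hUo.prod isOpen_Ioo) hVP (by norm_num) hp)
  have hsp' : HasFDerivAt (fun y => v y s)
      ((fderiv ℝ (Vfun v) (x, s)).comp (ContinuousLinearMap.inl ℝ (Sp n) ℝ)) x := hsp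
  unfold cDv gradMat Mfun entM
  refine congrArg matOf (funext fun q => ?_)
  rw [hsp'.fderiv]
  simp

theorem hasDerivAt_M_time :
    HasDerivAt (fun s' => Mfun v (x, s')) (DMt v (x, s)) s := by
  have hpi : HasDerivAt (fun s' => fun q => entM v q (x, s'))
      (fun q => fderiv ℝ (entM v q) (x, s) (0, 1)) s := by
    rw [hasDerivAt_pi]
    intro q
    exact hasDerivAt_timeSlice (diffAt_of_contDiffOn (hUo.prod isOpen_Ioo)
      (contDiffOn_entM (hUo.prod isOpen_Ioo) hVP q) (by norm_num) hp)
  have := ((PiLp.continuousLinearEquiv 2 ℝ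
    (fun _ : Fin m × Fin n => ℝ)).symm : (Fin m × Fin n → ℝ) →L[ℝ] Mat m n)
    |>.hasFDerivAt.comp_hasDerivAt s hpi
  exact this

theorem cDv_eventuallyEq :
    (fun s' => cDv v x s') =ᶠ[𝓝 s] (fun s' => Mfun v (x, s')) := by
  have hmem : Set.Ioo (0:ℝ) T ∈ 𝓝 s := isOpen_Ioo.mem_nhds hp.2
  filter_upwards [hmem] with s' hs'
  exact cDv_eq_M hUo hVP (Set.mk_mem_prod hp.1 hs')

theorem hasDerivAt_cDv_time :
    HasDerivAt (fun s' => cDv v x s') (DMt v (x, s)) s :=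
  (hasDerivAt_M_time hUo hVP hp).congr_of_eventuallyEq (cDv_eventuallyEq hUo hVP hp)

theorem clairaut : DMt v (x, s) = cDvt v x s := by
  classical
  set P : Set (Sp n × ℝ) := U ×ˢ Set.Ioo (0:ℝ) T with hPdef
  have hPo : IsOpen P := hUo.prod isOpen_Ioo
  set G : Sp n × ℝ → (Sp n × ℝ) →L[ℝ] Tg m := fderiv ℝ (Vfun v) with hGdef
  have hGsm : ContDiffOn ℝ ∞ G P := hVP.fderiv_of_isOpen hPo (by simp)
  have hGd : DifferentiableAt ℝ G (x, s) := diffAt_of_contDiffOn hPo hGsm (by norm_num) hp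
  set G' : (Sp n × ℝ) →L[ℝ] (Sp n × ℝ) →L[ℝ] Tg m := fderiv ℝ G (x, s) with hG'def
  have hsymm : ∀ a b : Sp n × ℝ, G' a b = G' b a := by
    intro a b
    apply second_derivative_symmetric_of_eventually (f := Vfun v) (f' := G) (x := (x, s))
    · filter_upwards [hPo.mem_nhds hp] with p' hp'
      exact (diffAt_of_contDiffOn hPo hVP (by norm_num) hp').hasFDerivAt
    · exact hGd.hasFDerivAt
  -- compute DMt entries
  have hDMt : ∀ q : Fin m × Fin n,
      fderiv ℝ (entM v q) (x, s) (0, 1) = G' (0, 1) (EuclideanSpace.single q.2 1, 0) q.1 := by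
    intro q
    set B := ((EuclideanSpace.proj (𝕜 := ℝ) q.1).comp
      (ContinuousLinearMap.apply ℝ (Tg m) ((EuclideanSpace.single q.2 1 : Sp n), (0:ℝ))))
      with hBdef
    have h0 := B.hasFDerivAt.comp (x, s) hGd.hasFDerivAt
    have h1 : HasFDerivAt (entM v q) (B.comp G') (x, s) := h0
    rw [h1.fderiv]
    rfl
  -- compute cDvt entries
  have hW : ∀ y ∈ U, cvt v y s = Wfun v (y, s) := fun y hy =>
    cvt_eq_W hUo hVP (Set.mk_mem_prod hy hp.2)
  have hev : (fun y => cvt v y s) =ᶠ[𝓝 x] (fun y => Wfun v (y, s)) := by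
    filter_upwards [hUo.mem_nhds hp.1] with y hy using hW y hy
  have hWd : DifferentiableAt ℝ (Wfun v) (x, s) :=
    diffAt_of_contDiffOn hPo (contDiffOn_Wfun hPo hVP) (by norm_num) hp
  have hWsp := hasFDerivAt_spaceSlice (g := Wfun v) hWd
  set A := ContinuousLinearMap.apply ℝ (Tg m) (((0 : Sp n), (1:ℝ)) : Sp n × ℝ) with hAdef
  have hWfd0 := A.hasFDerivAt.comp (x, s) hGd.hasFDerivAt
  have hWfd : HasFDerivAt (Wfun v) (A.comp G') (x, s) := hWfd0
  have hcDvt : ∀ q : Fin m × Fin n,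
      fderiv ℝ (fun y => cvt v y s) x (EuclideanSpace.single q.2 1) q.1 =
        G' (EuclideanSpace.single q.2 1, 0) (0, 1) q.1 := by
    intro q
    rw [hev.fderiv_eq, hWsp.fderiv]
    rw [hWfd.fderiv]
    rfl
  unfold cDvt gradMat DMt
  refine congrArg matOf (funext fun q => ?_)
  rw [hDMt q, hcDvt q, hsymm (EuclideanSpace.single q.2 1, 0) (0, 1)]

end Pointwise

theorem integrableOn_glue {n : ℕ} {E : Type*} [NormedAddCommGroup E] [NormedSpace ℝ E]
    {f : Sp n → E} {U K : Set (Sp n)} (hUo : IsOpen U) (hK : IsCompact K) (hKU : K ⊆ U)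
    (hf : ContinuousOn f U) (h0 : ∀ x ∉ K, f x = 0) : IntegrableOn f U := by
  have hc : Continuous f :=
    contDiff_zero.mp (glueContDiff hUo hK.isClosed hKU (contDiffOn_zero.mpr hf) h0)
  exact (hc.integrable_of_hasCompactSupport (HasCompactSupport.intro hK h0)).integrableOn

theorem continuousOn_slice {n : ℕ} {E : Type*} [TopologicalSpace E] {G : Sp n × ℝ → E}
    {U : Set (Sp n)} {T s : ℝ} (h : ContinuousOn G (U ×ˢ Set.Ioo (0:ℝ) T))
    (hs : s ∈ Set.Ioo (0:ℝ) T) : ContinuousOn (fun x => G (x, s)) U :=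
  h.comp ((continuous_id.prodMk continuous_const).continuousOn)
    (fun x hx => Set.mk_mem_prod hx hs)

end Aux


set_option maxHeartbeats 2000000 in
/-- the second integral identity for classical solutions. -/
theorem statement1
    (n m : ℕ) (hn : 0 < n) (hm : 0 < m)
    (ψ : Tg m → ℝ) (F : Mat m n → ℝ) (hψ : ContDiff ℝ 2 ψ) (hF : ContDiff ℝ 2 F)
    (θ Θ lam Lam : ℝ) (hθ : 0 < θ) (hΘ : 0 < Θ) (hlam : 0 < lam) (hLam : 0 < Lam)
    (hUCψ : UnifConv θ Θ ψ) (hUCF : UnifConv lam Lam F)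
    (U : Set (Sp n)) (T : ℝ) (hU : IsBddDomain U) (hT : 0 < T)
    (v : Sp n → ℝ → Tg m) (hv : IsClassicalSolution ψ F U T v)
    (φ : Sp n × ℝ → ℝ) (hφ : IsSTTest U T φ) :
    ∀ t ∈ Set.Ioo (0 : ℝ) T,
      HasDerivAt (fun s => ∫ x in U, φ (x, s) * legendre ψ (gradient ψ (cvt v x s)))
        ((∫ x in U, (legendre ψ (gradient ψ (cvt v x t)) * tDeriv φ x t -
            hessBil F (cDv v x t) (cDvt v x t) (tens (cvt v x t) (spGrad φ x t)))) -
          ∫ x in U, φ (x, t) * hessBil F (cDv v x t) (cDvt v x t) (cDvt v x t)) t := by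
  intro t ht
  classical
  obtain ⟨hUo, hUconn, hUbdd⟩ := hU
  have hVP : ContDiffOn ℝ ∞ (Vfun v) (U ×ˢ Set.Ioo (0:ℝ) T) := hv.1
  have hPo : IsOpen (U ×ˢ Set.Ioo (0:ℝ) T) := hUo.prod isOpen_Ioo
  set K : Set (Sp n) := Prod.fst '' tsupport φ with hKdef
  have hKc : IsCompact K := hφ.cpt.image continuous_fst
  have hKU : K ⊆ U := by
    rintro _ ⟨p, hp, rfl⟩
    exact (hφ.supp hp).1
  have hφ0 : ∀ x ∉ K, ∀ s : ℝ, φ (x, s) = 0 := by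
    intro x hx s
    by_contra h
    exact hx ⟨(x, s), subset_tsupport φ h, rfl⟩
  have hφf0 : ∀ x ∉ K, ∀ s : ℝ, fderiv ℝ φ (x, s) = 0 := by
    intro x hx s
    apply fderiv_zero_of_eventually_zero
    have hopen : IsOpen (Prod.fst ⁻¹' Kᶜ : Set (Sp n × ℝ)) :=
      hKc.isClosed.isOpen_compl.preimage continuous_fst
    exact Filter.eventuallyEq_of_mem (hopen.mem_nhds hx)
      (fun p hp => hφ0 p.1 hp (p.2))
  -- ψ facts
  have hψd : Differentiable ℝ ψ := hψ.differentiable (by norm_num)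
  have hFd : Differentiable ℝ F := hF.differentiable (by norm_num)
  have hψmono : ∀ y z : Tg m, 0 ≤ ⟪gradient ψ y - gradient ψ z, y - z⟫ := by
    intro y z
    refine le_trans ?_ (hUCψ y z).1
    positivity
  have hgψ : ContDiff ℝ 1 (gradient ψ) := by
    have h1 : ContDiff ℝ 1 (fderiv ℝ ψ) := hψ.fderiv_right (by norm_num)
    exact ((InnerProductSpace.toDual ℝ (Tg m)).symm.contDiff).comp h1
  have hgF : ContDiff ℝ 1 (gradient F) := by
    have h1 : ContDiff ℝ 1 (fderiv ℝ F) := hF.fderiv_right (by norm_num)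
    exact ((InnerProductSpace.toDual ℝ (Mat m n)).symm.contDiff).comp h1
  -- test function u
  set u : Sp n → Tg m := fun y => φ (y, t) • cvt v y t with hudef
  have hu0 : ∀ y ∉ K, u y = 0 := by
    intro y hy
    rw [hudef]
    simp [hφ0 y hy t]
  have hφsl : ContDiff ℝ ∞ (fun y : Sp n => φ (y, t)) :=
    hφ.smooth.comp (contDiff_id.prodMk contDiff_const)
  have hWsl : ContDiffOn ℝ ∞ (fun y => Wfun v (y, t)) U := by
    refine (contDiffOn_Wfun hPo hVP).comp
      ((contDiff_id.prodMk contDiff_const).contDiffOn) (fun y hy => Set.mk_mem_prod hy ht)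
  have hu : ContDiff ℝ ∞ u := by
    refine glueContDiff hUo hKc.isClosed hKU ?_ hu0
    refine ((hφsl.contDiffOn.smul hWsl).congr (fun y hy => ?_))
    rw [hudef]
    simp only [cvt_eq_W hUo hVP (Set.mk_mem_prod hy ht)]
    rfl
  have hugrad : ∀ x ∈ U, gradMat u x =
      φ (x, t) • cDvt v x t + tens (cvt v x t) (spGrad φ x t) := by
    intro x hx
    have hφd : DifferentiableAt ℝ φ (x, t) := (hφ.smooth.differentiable (by norm_num)) (x, t)
    have hφy : HasFDerivAt (fun y => φ (y, t))
        ((fderiv ℝ φ (x, t)).comp (ContinuousLinearMap.inl ℝ (Sp n) ℝ)) x :=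
      hasFDerivAt_spaceSlice hφd
    have hWd : DifferentiableAt ℝ (Wfun v) (x, t) :=
      diffAt_of_contDiffOn hPo (contDiffOn_Wfun hPo hVP) (by norm_num) (Set.mk_mem_prod hx ht)
    have hWsp := hasFDerivAt_spaceSlice (g := Wfun v) hWd
    have hev : (fun y => cvt v y t) =ᶠ[𝓝 x] (fun y => Wfun v (y, t)) := by
      filter_upwards [hUo.mem_nhds hx] with y hy
      exact cvt_eq_W hUo hVP (Set.mk_mem_prod hy ht)
    have hwct : HasFDerivAt (fun y => cvt v y t)
        ((fderiv ℝ (Wfun v) (x, t)).comp (ContinuousLinearMap.inl ℝ (Sp n) ℝ)) x :=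
      hWsp.congr_of_eventuallyEq hev
    have hsmul := hφy.smul hwct
    have hu' : HasFDerivAt u
        (φ (x, t) • ((fderiv ℝ (Wfun v) (x, t)).comp (ContinuousLinearMap.inl ℝ (Sp n) ℝ)) +
          ((fderiv ℝ φ (x, t)).comp (ContinuousLinearMap.inl ℝ (Sp n) ℝ)).smulRight
            (cvt v x t)) x := hsmul
    unfold gradMat cDvt gradMat
    ext q
    rw [hu'.fderiv]
    simp only [matOf, WithLp.equiv_symm_apply, PiLp.toLp_apply, ContinuousLinearMap.add_apply,
      ContinuousLinearMap.coe_smul', Pi.smul_apply, ContinuousLinearMap.smulRight_apply,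
      ContinuousLinearMap.comp_apply, ContinuousLinearMap.inl_apply,
      PiLp.add_apply, PiLp.smul_apply, smul_eq_mul, tens, vecOf, hwct.fderiv]
    unfold spGrad
    simp only [WithLp.equiv_symm_apply, PiLp.toLp_apply]
    ring
  have hgradMatu0 : ∀ x ∉ K, gradMat u x = 0 := by
    intro x hx
    have : fderiv ℝ u x = 0 := by
      apply fderiv_zero_of_eventually_zero
      exact Filter.eventuallyEq_of_mem (hKc.isClosed.isOpen_compl.mem_nhds hx)
        (fun y hy => hu0 y hy)
    unfold gradMat
    have hz : (fun q : Fin m × Fin n => fderiv ℝ u x (EuclideanSpace.single q.2 1) q.1) =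
        fun _ => 0 := by
      funext q; rw [this]; rfl
    rw [hz]
    rfl
  -- the fields
  set AS : Sp n × ℝ → Tg m :=
    fun p => fderiv ℝ (gradient ψ) (Wfun v p) (W2fun v p) with hASdef
  set BS : Sp n × ℝ → Mat m n :=
    fun p => fderiv ℝ (gradient F) (Mfun v p) (DMt v p) with hBSdef
  set Lc : Sp n → ℝ → ℝ :=
    fun x s => ⟪gradient ψ (cvt v x s), cvt v x s⟫ - ψ (cvt v x s) with hLcdef
  -- Legendre identity
  have hleg : ∀ x s, legendre ψ (gradient ψ (cvt v x s)) = Lc x s := fun x s =>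
    legendre_gradient hψd hψmono (cvt v x s)
  -- continuity facts
  have hcontW : ContinuousOn (Wfun v) (U ×ˢ Set.Ioo (0:ℝ) T) :=
    (contDiffOn_Wfun hPo hVP).continuousOn
  have hcontW2 : ContinuousOn (W2fun v) (U ×ˢ Set.Ioo (0:ℝ) T) :=
    (contDiffOn_W2fun hPo hVP).continuousOn
  have hcontM : ContinuousOn (Mfun v) (U ×ˢ Set.Ioo (0:ℝ) T) :=
    (contDiffOn_Mfun hPo hVP).continuousOn
  have hcontDMt : ContinuousOn (DMt v) (U ×ˢ Set.Ioo (0:ℝ) T) :=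
    (contDiffOn_DMt hPo hVP).continuousOn
  have hcontAS : ContinuousOn AS (U ×ˢ Set.Ioo (0:ℝ) T) := by
    rw [hASdef]
    exact ((hgψ.continuous_fderiv one_ne_zero).comp_continuousOn hcontW).clm_apply hcontW2
  have hcontBS : ContinuousOn BS (U ×ˢ Set.Ioo (0:ℝ) T) := by
    rw [hBSdef]
    exact ((hgF.continuous_fderiv one_ne_zero).comp_continuousOn hcontM).clm_apply hcontDMt
  have hcvtEq : ∀ p ∈ U ×ˢ Set.Ioo (0:ℝ) T, cvt v p.1 p.2 = Wfun v p := fun p hp =>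
    cvt_eq_W hUo hVP (by simpa using hp)
  have hcDvEq : ∀ p ∈ U ×ˢ Set.Ioo (0:ℝ) T, cDv v p.1 p.2 = Mfun v p := fun p hp =>
    cDv_eq_M hUo hVP (by simpa using hp)
  have hcontcvt : ContinuousOn (fun p : Sp n × ℝ => cvt v p.1 p.2)
      (U ×ˢ Set.Ioo (0:ℝ) T) := hcontW.congr hcvtEq
  have hcontcDv : ContinuousOn (fun p : Sp n × ℝ => cDv v p.1 p.2)
      (U ×ˢ Set.Ioo (0:ℝ) T) := hcontM.congr hcDvEq
  have hcontLc : ContinuousOn (fun p : Sp n × ℝ => Lc p.1 p.2) (U ×ˢ Set.Ioo (0:ℝ) T) := by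
    rw [hLcdef]
    exact ((hgψ.continuous.comp_continuousOn hcontcvt).inner hcontcvt).sub
      (hψ.continuous.comp_continuousOn hcontcvt)
  have hcontφ : Continuous φ := hφ.smooth.continuous
  have hconttD : Continuous (fun p : Sp n × ℝ => tDeriv φ p.1 p.2) := by
    have : Continuous (fun p : Sp n × ℝ => fderiv ℝ φ p (0, 1)) :=
      (hφ.smooth.continuous_fderiv (by norm_num)).clm_apply continuous_const
    exact this
  have hgMu : Continuous (gradMat u) := by
    unfold gradMat
    refine ((PiLp.continuousLinearEquiv 2 ℝ
      (fun _ : Fin m × Fin n => ℝ)).symm.continuous).comp (continuous_pi fun q => ?_)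
    exact ((EuclideanSpace.proj q.1).continuous).comp
      ((hu.continuous_fderiv (by norm_num)).clm_apply continuous_const)
  -- derivative statements
  have hI : HasDerivAt (fun s => ∫ x in U, φ (x, s) * Lc x s)
      (∫ x in U, (tDeriv φ x t * Lc x t + φ (x, t) * ⟪AS (x, t), cvt v x t⟫)) t := by
    apply hasDerivAt_setIntegral_param hUo hKc hKU ht
      (f := fun x s => φ (x, s) * Lc x s)
      (f' := fun x s => tDeriv φ x s * Lc x s + φ (x, s) * ⟪AS (x, s), cvt v x s⟫)
    · exact (hcontφ.comp_continuousOn (continuousOn_fst.prodMk continuousOn_snd)).mul hcontLc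
    · refine ((hconttD.continuousOn).mul hcontLc).add
        ((hcontφ.comp_continuousOn (continuousOn_fst.prodMk continuousOn_snd)).mul
          (hcontAS.inner hcontcvt))
    · intro x hx s hs
      have hp : (x, s) ∈ U ×ˢ Set.Ioo (0:ℝ) T := Set.mk_mem_prod hx hs
      have hφt : HasDerivAt (fun s' => φ (x, s')) (tDeriv φ x s) s :=
        hasDerivAt_timeSlice ((hφ.smooth.differentiable (by norm_num)) (x, s))
      have hw : HasDerivAt (fun s' => cvt v x s') (W2fun v (x, s)) s :=
        hasDerivAt_cvt_time hUo hVP hp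
      have hcw : cvt v x s = Wfun v (x, s) := cvt_eq_W hUo hVP hp
      have ha : HasDerivAt (fun s' => gradient ψ (cvt v x s')) (AS (x, s)) s := by
        have h1 := ((hgψ.differentiable one_ne_zero) (cvt v x s)).hasFDerivAt.comp_hasDerivAt s hw
        have h2 : fderiv ℝ (gradient ψ) (cvt v x s) (W2fun v (x, s)) = AS (x, s) := by
          rw [hASdef, hcw]
        rwa [h2] at h1
      have hψc : HasDerivAt (fun s' => ψ (cvt v x s'))
          (⟪gradient ψ (cvt v x s), W2fun v (x, s)⟫) s := by
        have h1 := (hψd (cvt v x s)).hasFDerivAt.comp_hasDerivAt s hw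
        rwa [← inner_gradient_apply] at h1
      have hLd : HasDerivAt (fun s' => Lc x s') (⟪AS (x, s), cvt v x s⟫) s := by
        have h2 := (ha.inner ℝ hw).sub hψc
        have h3 : (⟪gradient ψ (cvt v x s), W2fun v (x, s)⟫ + ⟪AS (x, s), cvt v x s⟫) -
            ⟪gradient ψ (cvt v x s), W2fun v (x, s)⟫ = ⟪AS (x, s), cvt v x s⟫ := by ring
        rw [h3] at h2
        simp only [hLcdef]
        exact h2
      exact hφt.mul hLd
    · intro x hx s
      simp [hφ0 x hx s]
    · intro x hx s
      have h1 : tDeriv φ x s = 0 := by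
        unfold tDeriv
        rw [hφf0 x hx s]
        rfl
      simp [h1, hφ0 x hx s]
  have hPd : HasDerivAt (fun s => ∫ x in U, ⟪gradient ψ (cvt v x s), u x⟫)
      (∫ x in U, ⟪AS (x, t), u x⟫) t := by
    apply hasDerivAt_setIntegral_param hUo hKc hKU ht
      (f := fun x s => ⟪gradient ψ (cvt v x s), u x⟫)
      (f' := fun x s => ⟪AS (x, s), u x⟫)
    · exact (hgψ.continuous.comp_continuousOn hcontcvt).inner
        ((hu.continuous.comp continuous_fst).continuousOn)
    · exact hcontAS.inner ((hu.continuous.comp continuous_fst).continuousOn)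
    · intro x hx s hs
      have hp : (x, s) ∈ U ×ˢ Set.Ioo (0:ℝ) T := Set.mk_mem_prod hx hs
      have hw : HasDerivAt (fun s' => cvt v x s') (W2fun v (x, s)) s :=
        hasDerivAt_cvt_time hUo hVP hp
      have hcw : cvt v x s = Wfun v (x, s) := cvt_eq_W hUo hVP hp
      have ha : HasDerivAt (fun s' => gradient ψ (cvt v x s')) (AS (x, s)) s := by
        have h1 := ((hgψ.differentiable one_ne_zero) (cvt v x s)).hasFDerivAt.comp_hasDerivAt s hw
        have h2 : fderiv ℝ (gradient ψ) (cvt v x s) (W2fun v (x, s)) = AS (x, s) := by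
          rw [hASdef, hcw]
        rwa [h2] at h1
      have h3 := ha.inner ℝ (hasDerivAt_const s (u x))
      simpa using h3
    · intro x hx s
      simp [hu0 x hx]
    · intro x hx s
      simp [hu0 x hx]
  have hQd : HasDerivAt (fun s => ∫ x in U, ⟪gradient F (cDv v x s), gradMat u x⟫)
      (∫ x in U, ⟪BS (x, t), gradMat u x⟫) t := by
    apply hasDerivAt_setIntegral_param hUo hKc hKU ht
      (f := fun x s => ⟪gradient F (cDv v x s), gradMat u x⟫)
      (f' := fun x s => ⟪BS (x, s), gradMat u x⟫)
    · exact (hgF.continuous.comp_continuousOn hcontcDv).inner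
        ((hgMu.comp continuous_fst).continuousOn)
    · exact hcontBS.inner ((hgMu.comp continuous_fst).continuousOn)
    · intro x hx s hs
      have hp : (x, s) ∈ U ×ˢ Set.Ioo (0:ℝ) T := Set.mk_mem_prod hx hs
      have hMd : HasDerivAt (fun s' => cDv v x s') (DMt v (x, s)) s :=
        hasDerivAt_cDv_time hUo hVP hp
      have hcM : cDv v x s = Mfun v (x, s) := cDv_eq_M hUo hVP hp
      have hb : HasDerivAt (fun s' => gradient F (cDv v x s')) (BS (x, s)) s := by
        have h1 := ((hgF.differentiable one_ne_zero) (cDv v x s)).hasFDerivAt.comp_hasDerivAt s hMd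
        have h2 : fderiv ℝ (gradient F) (cDv v x s) (DMt v (x, s)) = BS (x, s) := by
          rw [hBSdef, hcM]
        rwa [h2] at h1
      have h3 := hb.inner ℝ (hasDerivAt_const s (gradMat u x))
      simpa using h3
    · intro x hx s
      simp [hgradMatu0 x hx]
    · intro x hx s
      simp [hgradMatu0 x hx]
  have hPQ : ∀ s ∈ Set.Ioo (0:ℝ) T,
      (∫ x in U, ⟪gradient ψ (cvt v x s), u x⟫) +
        (∫ x in U, ⟪gradient F (cDv v x s), gradMat u x⟫) = 0 := by
    intro s hs
    set c : Fin m → Fin n → Sp n → ℝ :=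
      fun i j y => gradient F (cDv v y s) (i, j) with hcdef
    set g : Fin n → Sp n → ℝ := fun j y => ∑ i, c i j y * u y i with hgdef
    -- smoothness of c on U
    have hMsl : ContDiffOn ℝ ∞ (fun y => Mfun v (y, s)) U :=
      (contDiffOn_Mfun hPo hVP).comp ((contDiff_id.prodMk contDiff_const).contDiffOn)
        (fun y hy => Set.mk_mem_prod hy hs)
    have hcsm : ∀ i j, ContDiffOn ℝ 1 (c i j) U := by
      intro i j
      have base0 : ContDiffOn ℝ 1 ((EuclideanSpace.proj (𝕜 := ℝ) ((i, j) : Fin m × Fin n)) ∘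
          gradient F ∘ (fun y => Mfun v (y, s))) U :=
        (EuclideanSpace.proj _).contDiff.comp_contDiffOn
          (hgF.comp_contDiffOn (hMsl.of_le (by norm_num)))
      have base : ContDiffOn ℝ 1 (fun y => gradient F (Mfun v (y, s)) (i, j)) U := base0
      refine base.congr (fun y hy => ?_)
      rw [hcdef]
      simp only [cDv_eq_M hUo hVP (Set.mk_mem_prod hy hs)]
    have hui : ∀ i, ContDiff ℝ 1 (fun y => u y i) := by
      intro i
      have h0 : ContDiff ℝ 1 ((EuclideanSpace.proj (𝕜 := ℝ) i) ∘ u) :=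
        (EuclideanSpace.proj _).contDiff.comp (hu.of_le (by norm_num))
      exact h0
    have hgis : ∀ j, ContDiff ℝ 1 (g j) := by
      intro j
      refine glueContDiff hUo hKc.isClosed hKU ?_ ?_
      · exact ContDiffOn.sum (fun i _ => (hcsm i j).mul (hui i).contDiffOn)
      · intro y hy
        rw [hgdef]
        simp [hu0 y hy]
    have hgcs : ∀ j, HasCompactSupport (g j) := by
      intro j
      refine HasCompactSupport.intro hKc (fun y hy => ?_)
      rw [hgdef]; simp [hu0 y hy]
    have hint0 : ∀ j, (∫ y, fderiv ℝ (g j) y (EuclideanSpace.single j 1)) = 0 := fun j =>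
      integral_fderiv_dir_eq_zero (hgis j) (hgcs j) _
    -- pointwise identity on U
    have hptwise : ∀ x ∈ U,
        ⟪gradient ψ (cvt v x s), u x⟫ + ⟪gradient F (cDv v x s), gradMat u x⟫ =
          ∑ j, fderiv ℝ (g j) x (EuclideanSpace.single j 1) := by
      intro x hx
      have hcd : ∀ i j, DifferentiableAt ℝ (c i j) x := fun i j =>
        diffAt_of_contDiffOn hUo (hcsm i j) le_rfl hx
      have hud : ∀ i, DifferentiableAt ℝ (fun y => u y i) x := fun i =>
        ((hui i).differentiable one_ne_zero) x
      have hfg : ∀ j, fderiv ℝ (g j) x (EuclideanSpace.single j 1) =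
          ∑ i, (c i j x * fderiv ℝ (fun y => u y i) x (EuclideanSpace.single j 1) +
            u x i * fderiv ℝ (c i j) x (EuclideanSpace.single j 1)) := by
        intro j
        rw [hgdef]
        rw [fderiv_fun_sum (A := fun i y => c i j y * u y i) (fun i _ => ((hcd i j).mul (hud i)))]
        rw [ContinuousLinearMap.sum_apply]
        refine Finset.sum_congr rfl (fun i _ => ?_)
        rw [fderiv_fun_mul (hcd i j) (hud i)]
        simp only [ContinuousLinearMap.add_apply, ContinuousLinearMap.coe_smul',
          Pi.smul_apply, smul_eq_mul]
      -- PDE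
      have hPDE : ∀ i, gradient ψ (cvt v x s) i =
          ∑ j, fderiv ℝ (c i j) x (EuclideanSpace.single j 1) := by
        intro i
        rw [hcdef]
        exact hv.2 x hx s hs i
      -- coordinates of fderiv u
      have hproj : ∀ (e : Sp n) (i : Fin m),
          fderiv ℝ u x e i = fderiv ℝ (fun y => u y i) x e := by
        intro e i
        have h1 := ((EuclideanSpace.proj (𝕜 := ℝ) i).hasFDerivAt.comp x
          ((hu.differentiable (by norm_num)) x).hasFDerivAt)
        have h2 : fderiv ℝ (fun y => u y i) x =
            (EuclideanSpace.proj (𝕜 := ℝ) i).comp (fderiv ℝ u x) := h1.fderiv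
        rw [h2]
        rfl
      -- expand inner products
      have hin1 : ⟪gradient ψ (cvt v x s), u x⟫ =
          ∑ i, gradient ψ (cvt v x s) i * u x i := by
        simp only [PiLp.inner_apply, RCLike.inner_apply, conj_trivial]
        exact Finset.sum_congr rfl fun i _ => by ring
      have hin2 : ⟪gradient F (cDv v x s), gradMat u x⟫ =
          ∑ i, ∑ j, c i j x * fderiv ℝ (fun y => u y i) x (EuclideanSpace.single j 1) := by
        rw [hcdef]
        simp only [PiLp.inner_apply, RCLike.inner_apply, conj_trivial]
        rw [Fintype.sum_prod_type]
        refine Finset.sum_congr rfl (fun i _ => Finset.sum_congr rfl (fun j _ => ?_))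
        unfold gradMat
        simp only [matOf, WithLp.equiv_symm_apply, PiLp.toLp_apply]
        rw [hproj]
        ring
      rw [hin1, hin2]
      have hsum : ∑ j, fderiv ℝ (g j) x (EuclideanSpace.single j 1) =
          ∑ j, ∑ i, (c i j x * fderiv ℝ (fun y => u y i) x (EuclideanSpace.single j 1) +
            u x i * fderiv ℝ (c i j) x (EuclideanSpace.single j 1)) :=
        Finset.sum_congr rfl (fun j _ => hfg j)
      rw [hsum]
      simp only [hPDE, Finset.sum_mul]
      simp only [← Finset.sum_add_distrib]
      rw [Finset.sum_comm]
      exact Finset.sum_congr rfl (fun j _ => Finset.sum_congr rfl (fun i _ => by ring))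
    -- integrability of the two pieces
    have hint1 : IntegrableOn (fun x => ⟪gradient ψ (cvt v x s), u x⟫) U := by
      refine integrableOn_glue hUo hKc hKU ?_ (fun x hx => by simp [hu0 x hx])
      exact ((hgψ.continuous.comp_continuousOn (continuousOn_slice hcontcvt hs)).inner
        hu.continuous.continuousOn)
    have hint2 : IntegrableOn (fun x => ⟪gradient F (cDv v x s), gradMat u x⟫) U := by
      refine integrableOn_glue hUo hKc hKU ?_ (fun x hx => by simp [hgradMatu0 x hx])
      exact ((hgF.continuous.comp_continuousOn (continuousOn_slice hcontcDv hs)).inner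
        hgMu.continuousOn)
    rw [← MeasureTheory.integral_add hint1 hint2]
    have hcongr : (∫ x in U, (⟪gradient ψ (cvt v x s), u x⟫ +
        ⟪gradient F (cDv v x s), gradMat u x⟫)) =
        ∫ x in U, ∑ j, fderiv ℝ (g j) x (EuclideanSpace.single j 1) :=
      MeasureTheory.setIntegral_congr_fun hUo.measurableSet (fun x hx => hptwise x hx)
    rw [hcongr]
    have hgj0 : ∀ j, ∀ x ∉ K, fderiv ℝ (g j) x = 0 := by
      intro j x hx
      apply fderiv_zero_of_eventually_zero
      refine Filter.eventuallyEq_of_mem (hKc.isClosed.isOpen_compl.mem_nhds hx)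
        (fun y hy => ?_)
      rw [hgdef]; simp [hu0 y hy]
    have hext : (∫ x in U, ∑ j, fderiv ℝ (g j) x (EuclideanSpace.single j 1)) =
        ∫ x, ∑ j, fderiv ℝ (g j) x (EuclideanSpace.single j 1) := by
      apply MeasureTheory.setIntegral_eq_integral_of_forall_compl_eq_zero
      intro x hx
      have hxK : x ∉ K := fun h => hx (hKU h)
      simp [hgj0 _ x hxK]
    rw [hext]
    rw [MeasureTheory.integral_finset_sum]
    · simp [hint0]
    · intro j _
      apply Continuous.integrable_of_hasCompactSupport
      · exact ((hgis j).continuous_fderiv one_ne_zero).clm_apply continuous_const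
      · exact (hgcs j).fderiv_apply ℝ _
  -- derivative uniqueness: P' = -Q'
  have hPev : (fun s => ∫ x in U, ⟪gradient ψ (cvt v x s), u x⟫) =ᶠ[𝓝 t]
      (fun s => -∫ x in U, ⟪gradient F (cDv v x s), gradMat u x⟫) := by
    filter_upwards [isOpen_Ioo.mem_nhds ht] with s hs
    have := hPQ s hs
    linarith
  have hPd' : HasDerivAt (fun s => ∫ x in U, ⟪gradient ψ (cvt v x s), u x⟫)
      (-(∫ x in U, ⟪BS (x, t), gradMat u x⟫)) t :=
    (hQd.neg).congr_of_eventuallyEq hPev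
  have hkey : (∫ x in U, ⟪AS (x, t), u x⟫) = -(∫ x in U, ⟪BS (x, t), gradMat u x⟫) :=
    hPd.unique hPd'
  -- final assembly
  have hhb : ∀ (M ξ ζ : Mat m n), hessBil F M ξ ζ = ⟪fderiv ℝ (gradient F) M ξ, ζ⟫ :=
    fun _ _ _ => rfl
  have hcDvtEq : ∀ x ∈ U, cDvt v x t = DMt v (x, t) := fun x hx =>
    (clairaut hUo hVP (Set.mk_mem_prod hx ht)).symm
  have hcDvtcont : ContinuousOn (fun x => cDvt v x t) U :=
    (continuousOn_slice hcontDMt ht).congr hcDvtEq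
  have hsp0 : ∀ x ∉ K, spGrad φ x t = 0 := by
    intro x hx
    unfold spGrad
    rw [hφf0 x hx t]
    ext j
    simp
  have htens0 : ∀ w : Tg m, tens w (0 : Sp n) = 0 := by
    intro w
    ext q
    simp [tens, matOf, vecOf]
  -- integrability
  have hi1 : IntegrableOn (fun x => tDeriv φ x t * Lc x t) U := by
    refine integrableOn_glue hUo hKc hKU ?_ (fun x hx => ?_)
    · exact ((hconttD.comp (continuous_id.prodMk continuous_const)).continuousOn).mul
        (continuousOn_slice hcontLc ht)
    · have h1 : tDeriv φ x t = 0 := by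
        unfold tDeriv
        rw [hφf0 x hx t]
        rfl
      simp [h1]
  have hi2 : IntegrableOn (fun x => φ (x, t) * ⟪AS (x, t), cvt v x t⟫) U := by
    refine integrableOn_glue hUo hKc hKU ?_ (fun x hx => by simp [hφ0 x hx t])
    exact hφsl.continuous.continuousOn.mul
      ((continuousOn_slice hcontAS ht).inner (continuousOn_slice hcontcvt ht))
  have hhessc : ContinuousOn
      (fun x => fderiv ℝ (gradient F) (cDv v x t) (cDvt v x t)) U :=
    ((hgF.continuous_fderiv one_ne_zero).comp_continuousOn
      (continuousOn_slice hcontcDv ht)).clm_apply hcDvtcont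
  have hi3 : IntegrableOn
      (fun x => φ (x, t) * hessBil F (cDv v x t) (cDvt v x t) (cDvt v x t)) U := by
    refine integrableOn_glue hUo hKc hKU ?_ (fun x hx => by simp [hφ0 x hx t])
    exact hφsl.continuous.continuousOn.mul (hhessc.inner hcDvtcont)
  have hi4 : IntegrableOn
      (fun x => hessBil F (cDv v x t) (cDvt v x t)
        (tens (cvt v x t) (spGrad φ x t))) U := by
    have hspc : Continuous (fun x => spGrad φ x t) := by
      unfold spGrad
      refine ((PiLp.continuousLinearEquiv 2 ℝ (fun _ : Fin n => ℝ)).symm.continuous).comp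
        (continuous_pi fun j => ?_)
      exact ((hφ.smooth.continuous_fderiv (by norm_num)).clm_apply continuous_const).comp
        (continuous_id.prodMk continuous_const)
    have htensc : ContinuousOn (fun x => tens (cvt v x t) (spGrad φ x t)) U := by
      unfold tens matOf
      refine ((PiLp.continuousLinearEquiv 2 ℝ
        (fun _ : Fin m × Fin n => ℝ)).symm.continuous).comp_continuousOn
        (continuousOn_pi.mpr fun q => ?_)
      refine ContinuousOn.mul ?_ ?_
      · exact (EuclideanSpace.proj (𝕜 := ℝ) q.1).continuous.comp_continuousOn
          (continuousOn_slice hcontcvt ht)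
      · exact (((EuclideanSpace.proj (𝕜 := ℝ) q.2).continuous).comp hspc).continuousOn
    refine integrableOn_glue hUo hKc hKU ?_ (fun x hx => ?_)
    · exact hhessc.inner htensc
    · rw [hsp0 x hx, htens0]
      simp [hhb]
  -- relation between BS pairing and hessBil terms
  have hBSg : ∀ x ∈ U, ⟪BS (x, t), gradMat u x⟫ =
      φ (x, t) * hessBil F (cDv v x t) (cDvt v x t) (cDvt v x t) +
        hessBil F (cDv v x t) (cDvt v x t) (tens (cvt v x t) (spGrad φ x t)) := by
    intro x hx
    have hp : (x, t) ∈ U ×ˢ Set.Ioo (0:ℝ) T := Set.mk_mem_prod hx ht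
    have h1 : BS (x, t) = fderiv ℝ (gradient F) (cDv v x t) (cDvt v x t) := by
      simp only [hBSdef]
      rw [← cDv_eq_M hUo hVP hp, clairaut hUo hVP hp]
    rw [h1, hugrad x hx, inner_add_right, real_inner_smul_right]
    rfl
  have e5 : (∫ x in U, ⟪BS (x, t), gradMat u x⟫) =
      (∫ x in U, φ (x, t) * hessBil F (cDv v x t) (cDvt v x t) (cDvt v x t)) +
        ∫ x in U, hessBil F (cDv v x t) (cDvt v x t)
          (tens (cvt v x t) (spGrad φ x t)) := by
    rw [MeasureTheory.setIntegral_congr_fun hUo.measurableSet hBSg]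
    exact MeasureTheory.integral_add hi3 hi4
  have hAu : ∀ x, ⟪AS (x, t), u x⟫ = φ (x, t) * ⟪AS (x, t), cvt v x t⟫ := by
    intro x
    rw [hudef]
    exact real_inner_smul_right _ _ _
  have e4 : (∫ x in U, φ (x, t) * ⟪AS (x, t), cvt v x t⟫) =
      ∫ x in U, ⟪AS (x, t), u x⟫ :=
    integral_congr_ae (Filter.Eventually.of_forall (fun x => (hAu x).symm))
  have e3 : (∫ x in U, (tDeriv φ x t * Lc x t + φ (x, t) * ⟪AS (x, t), cvt v x t⟫)) =
      (∫ x in U, tDeriv φ x t * Lc x t) +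
        ∫ x in U, φ (x, t) * ⟪AS (x, t), cvt v x t⟫ :=
    MeasureTheory.integral_add hi1 hi2
  have e1 : (∫ x in U, (legendre ψ (gradient ψ (cvt v x t)) * tDeriv φ x t -
      hessBil F (cDv v x t) (cDvt v x t) (tens (cvt v x t) (spGrad φ x t)))) =
      (∫ x in U, tDeriv φ x t * Lc x t) -
        ∫ x in U, hessBil F (cDv v x t) (cDvt v x t)
          (tens (cvt v x t) (spGrad φ x t)) := by
    rw [← MeasureTheory.integral_sub hi1 hi4]
    refine integral_congr_ae (Filter.Eventually.of_forall (fun x => ?_))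
    simp only [hleg]
    ring
  have hfun : (fun s => ∫ x in U, φ (x, s) * legendre ψ (gradient ψ (cvt v x s))) =
      (fun s => ∫ x in U, φ (x, s) * Lc x s) := by
    funext s
    simp only [hleg]
  rw [hfun]
  have hDV : (∫ x in U, (legendre ψ (gradient ψ (cvt v x t)) * tDeriv φ x t -
      hessBil F (cDv v x t) (cDvt v x t) (tens (cvt v x t) (spGrad φ x t)))) -
      (∫ x in U, φ (x, t) * hessBil F (cDv v x t) (cDvt v x t) (cDvt v x t)) =
      ∫ x in U, (tDeriv φ x t * Lc x t + φ (x, t) * ⟪AS (x, t), cvt v x t⟫) := by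
    rw [e1, e3]
    have := hkey
    rw [e4]
    linarith [e5]
  rw [hDV]
  exact hI


end
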